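/- Let D = Σ_{(n,6)=1, n>0} x^{n²} and G = Σ_{n odd, n>0} x^{3n²} in Z/2[[x]]. Then D³ = G. -/

import Mathlib

open PowerSeries Classical

/-- `D = Σ_{(n,6)=1, n > 0} x^{n²}` in `Z/2[[x]]`. -/
noncomputable def Dser : PowerSeries (ZMod 2) :=
  PowerSeries.mk fun n => if ∃ k : ℕ, Nat.Coprime k 6 ∧ 0 < k ∧ n = k ^ 2 then 1 else 0

/-- `G = F(x³) = Σ_{n odd, n > 0} x^{3n²}` in `Z/2[[x]]`. -/
noncomputable def Gser : PowerSeries (ZMod 2) :=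
  PowerSeries.mk fun n => if ∃ k : ℕ, Odd k ∧ 0 < k ∧ n = 3 * k ^ 2 then 1 else 0

open Finset

section helpers

lemma sq_bound {x m : ℤ} (hm : 0 ≤ m) (h : x^2 ≤ m) : -m ≤ x ∧ x ≤ m := by
  rcases le_or_gt 1 x with hx | hx
  · have h2 : x ≤ x^2 := by nlinarith
    constructor <;> linarith
  · rcases le_or_gt x (-1) with hx' | hx'
    · have h2 : -x ≤ x^2 := by nlinarith
      constructor <;> linarith
    · have hx0 : x = 0 := by omega
      subst hx0; constructor <;> simpa

lemma int3_aux {x y : ℤ} (h : (3:ℤ) ∣ (2*x^2+y^2)) (h2 : ¬ (3:ℤ) ∣ (x+y)) : (3:ℤ) ∣ (x - y) := by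
  have key : ∀ a b : ZMod 3, 2*a^2+b^2 = 0 → ¬(a+b = 0) → a - b = 0 := by decide
  rw [show (3:ℤ) = ((3:ℕ):ℤ) by norm_num] at h h2 ⊢
  rw [← ZMod.intCast_zmod_eq_zero_iff_dvd] at h h2 ⊢
  push_cast at h h2 ⊢
  exact key _ _ h h2

lemma int3_aux2 {x y : ℤ} (h : ¬ (3:ℤ) ∣ (2*x^2+y^2)) (h2 : ¬ (3:ℤ) ∣ (x+y)) : ¬ (3:ℤ) ∣ (y - x) := by
  have key : ∀ a b : ZMod 3, ¬(2*a^2+b^2 = 0) → ¬(a+b = 0) → ¬(b - a = 0) := by decide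
  rw [show (3:ℤ) = ((3:ℕ):ℤ) by norm_num] at h h2 ⊢
  rw [← ZMod.intCast_zmod_eq_zero_iff_dvd] at h h2 ⊢
  push_cast at h h2 ⊢
  exact key _ _ h h2

lemma sq_eq_sq_int (y : ℤ) (j : ℕ) (h : y^2 = (j:ℤ)^2) : y = j ∨ y = -j := by
  have h1 : y.natAbs = j := by
    have h2 : (y.natAbs : ℤ)^2 = (j:ℤ)^2 := by
      rcases Int.natAbs_eq y with h3 | h3 <;> rw [h3] at h <;> linarith [h]
    have h3 : y.natAbs ^ 2 = j ^ 2 := by exact_mod_cast h2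
    exact Nat.pow_left_injective (by norm_num) h3
  omega

lemma int_odd_sq_mod8 {x : ℤ} (hx : x % 2 = 1) : x^2 % 8 = 1 := by
  obtain ⟨t, ht⟩ : ∃ t, x = 2*t + 1 := ⟨(x-1)/2, by omega⟩
  obtain ⟨s, hs⟩ := Int.even_mul_succ_self t
  have : x^2 = 8*s + 1 := by rw [ht]; nlinarith [hs]
  omega

lemma nat_odd_sq_mod8 {k : ℕ} (hk : k % 2 = 1) : k^2 % 8 = 1 := by
  obtain ⟨t, ht⟩ : ∃ t, k = 2*t + 1 := ⟨(k-1)/2, by omega⟩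
  obtain ⟨s, hs⟩ := Nat.even_mul_succ_self t
  have : k^2 = 8*s + 1 := by rw [ht]; nlinarith [hs]
  omega

lemma nat_sq_mod3 {k : ℕ} (hk : ¬ k % 3 = 0) : k^2 % 3 = 1 := by
  rcases (by omega : k % 3 = 1 ∨ k % 3 = 2) with h | h
  · obtain ⟨t, ht⟩ : ∃ t, k = 3*t + 1 := ⟨k/3, by omega⟩
    have : k^2 = 3*(3*t^2 + 2*t) + 1 := by rw [ht]; ring
    omega
  · obtain ⟨t, ht⟩ : ∃ t, k = 3*t + 2 := ⟨k/3, by omega⟩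
    have : k^2 = 3*(3*t^2 + 4*t + 1) + 1 := by rw [ht]; ring
    omega

lemma cop6 {k : ℕ} : Nat.Coprime k 6 ↔ k % 6 = 1 ∨ k % 6 = 5 := by
  rw [Nat.Coprime, Nat.gcd_comm, Nat.gcd_rec]
  have h : k % 6 < 6 := Nat.mod_lt _ (by norm_num)
  generalize k % 6 = r at *
  interval_cases r <;> decide

lemma pow3_mod8 : ∀ e : ℕ, (e % 2 = 0 ∧ 3^e % 8 = 1) ∨ (e % 2 = 1 ∧ 3^e % 8 = 3) := by
  intro e
  induction e with
  | zero => left; exact ⟨rfl, rfl⟩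
  | succ e ih =>
    have hs : 3^(e+1) % 8 = ((3^e % 8) * 3) % 8 := by
      rw [pow_succ, Nat.mul_mod]
      try norm_num
    rcases ih with ⟨h1, h2⟩ | ⟨h1, h2⟩
    · right; constructor
      · omega
      · rw [hs, h2]
    · left; constructor
      · omega
      · rw [hs, h2]

lemma card_zmod_eq_fixed {α : Type*} [DecidableEq α] (s : Finset α) (g : α → α)
    (hmem : ∀ x ∈ s, g x ∈ s) (hinv : ∀ x ∈ s, g (g x) = x) :
    ((s.card : ZMod 2)) = (((s.filter (fun x => g x = x)).card : ZMod 2)) := by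
  classical
  have hsplit := Finset.card_filter_add_card_filter_not (s := s) (p := fun x => g x = x)
  have h0 : (((s.filter (fun x => ¬ g x = x)).card : ZMod 2)) = 0 := by
    rw [Finset.card_eq_sum_ones]
    push_cast
    refine Finset.sum_involution (fun a _ => g a) (fun a ha => by decide) ?_ ?_ ?_
    · intro a ha _
      exact (Finset.mem_filter.mp ha).2
    · intro a ha
      have has := (Finset.mem_filter.mp ha).1
      refine Finset.mem_filter.mpr ⟨hmem a has, ?_⟩
      rw [hinv a has]
      exact fun h => (Finset.mem_filter.mp ha).2 h.symm
    · intro a ha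
      exact hinv a (Finset.mem_filter.mp ha).1
  have h2 : ((s.card : ZMod 2)) = (((s.filter (fun x => g x = x)).card : ZMod 2)) + (((s.filter (fun x => ¬ g x = x)).card : ZMod 2)) := by
    rw [← Nat.cast_add, hsplit]
  rw [h2, h0, add_zero]

end helpers

section sets

noncomputable def Bset (m : ℕ) : Finset (ℤ × ℤ) :=
  (Finset.Icc (-(m:ℤ)) m ×ˢ Finset.Icc (-(m:ℤ)) m).filter
    (fun p => 2*p.1^2 + p.2^2 = (m:ℤ) ∧ ¬ ((3:ℤ) ∣ (p.1+p.2)) ∧ p.2 % 4 = 1)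

lemma mem_Bset {m : ℕ} {x y : ℤ} :
    (x, y) ∈ Bset m ↔ 2*x^2 + y^2 = (m:ℤ) ∧ ¬ ((3:ℤ) ∣ (x+y)) ∧ y % 4 = 1 := by
  simp only [Bset, mem_filter, mem_product, Finset.mem_Icc]
  constructor
  · tauto
  · intro h
    refine ⟨⟨?_, ?_⟩, h⟩
    · exact sq_bound (by positivity) (by nlinarith [h.1, sq_nonneg y, sq_nonneg x])
    · exact sq_bound (by positivity) (by nlinarith [h.1, sq_nonneg x])

noncomputable def Aset (n : ℕ) : Finset (ℤ × ℤ) :=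
  (Finset.Icc (-(n:ℤ)) n ×ˢ Finset.Icc (-(n:ℤ)) n).filter
    (fun p => 2*p.1^2 + p.2^2 = (n:ℤ) ∧ p.1 % 6 = 1 ∧ p.2 % 6 = 1)

lemma mem_Aset {n : ℕ} {x y : ℤ} :
    (x, y) ∈ Aset n ↔ 2*x^2 + y^2 = (n:ℤ) ∧ x % 6 = 1 ∧ y % 6 = 1 := by
  simp only [Aset, mem_filter, mem_product, Finset.mem_Icc]
  constructor
  · tauto
  · intro h
    refine ⟨⟨?_, ?_⟩, h⟩
    · exact sq_bound (by positivity) (by nlinarith [h.1, sq_nonneg y, sq_nonneg x])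
    · exact sq_bound (by positivity) (by nlinarith [h.1, sq_nonneg x])

def Pset (n : ℕ) : Finset (ℕ × ℕ) :=
  (Finset.range (n+1) ×ˢ Finset.range (n+1)).filter
    (fun p => (Nat.Coprime p.1 6 ∧ 0 < p.1) ∧ (Nat.Coprime p.2 6 ∧ 0 < p.2) ∧ 2*p.1^2 + p.2^2 = n)

lemma mem_Pset {n a b : ℕ} :
    (a, b) ∈ Pset n ↔ (Nat.Coprime a 6 ∧ 0 < a) ∧ (Nat.Coprime b 6 ∧ 0 < b) ∧ 2*a^2 + b^2 = n := by
  simp only [Pset, mem_filter, mem_product, Finset.mem_range]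
  constructor
  · tauto
  · intro h
    refine ⟨⟨?_, ?_⟩, h⟩
    · have := h.1.2; have := h.2.2; nlinarith [h.2.2, h.1.2]
    · nlinarith [h.2.2, h.2.1.2]

end sets

section baseinv

lemma Bset_base {m : ℕ} (hm : m % 2 = 1) (h3 : ¬ (3 ∣ m)) :
    ((Bset m).card : ZMod 2) = if ∃ j : ℕ, m = j^2 then 1 else 0 := by
  have h3' : ¬ ((3:ℤ) ∣ (m:ℤ)) := by
    intro hd; exact h3 (by exact_mod_cast hd)
  have hg : ∀ p ∈ Bset m, ((-p.1, p.2) : ℤ × ℤ) ∈ Bset m := by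
    rintro ⟨x, y⟩ hp
    rw [mem_Bset] at hp ⊢
    obtain ⟨heq, hnd, h4⟩ := hp
    refine ⟨by linear_combination heq, ?_, h4⟩
    have hh : ¬ (3:ℤ) ∣ (2*x^2+y^2) := by rw [heq]; exact h3'
    have := int3_aux2 hh hnd
    simpa [sub_eq_add_neg, add_comm] using this
  have hinv : ∀ p ∈ Bset m, ((-(-(p.1)), p.2) : ℤ × ℤ) = p := by
    intro p _; simp
  have key := card_zmod_eq_fixed (Bset m) (fun p => (-p.1, p.2)) hg hinv
  by_cases hsq : ∃ j : ℕ, m = j^2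
  · obtain ⟨j, hj⟩ := hsq
    have hjodd : j % 2 = 1 := by
      have h1 := Nat.pow_mod j 2 2
      rcases Nat.mod_two_eq_zero_or_one j with h | h
      · rw [h] at h1; simp at h1; omega
      · exact h
    set y0 : ℤ := if (j:ℤ) % 4 = 1 then (j:ℤ) else -(j:ℤ) with hy0def
    have hy0sq : y0^2 = (m:ℤ) := by
      rw [hy0def]; split_ifs <;> [skip; rw [neg_pow]] <;> push_cast [hj] <;> ring
    have hy04 : y0 % 4 = 1 := by
      have : (j:ℤ) % 2 = 1 := by omega
      rw [hy0def]; split_ifs with h <;> omega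
    have hy03 : ¬ ((3:ℤ) ∣ (0 + y0)) := by
      rw [zero_add]
      intro hd
      exact h3' (by rw [← hy0sq]; exact Dvd.dvd.pow hd (by norm_num))
    have hfix : (Bset m).filter (fun p => ((-p.1, p.2) : ℤ × ℤ) = p) = {((0:ℤ), y0)} := by
      ext ⟨x, y⟩
      simp only [mem_filter, mem_Bset, Finset.mem_singleton, Prod.mk.injEq]
      constructor
      · rintro ⟨⟨heq, hnd, h4⟩, hfx, -⟩
        have hx0 : x = 0 := by omega
        subst hx0
        have hyj : y^2 = (j:ℤ)^2 := by push_cast [hj] at heq; linarith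
        have hj4 : (j:ℤ) % 2 = 1 := by omega
        rcases sq_eq_sq_int y j hyj with h | h <;>
          · constructor
            · rfl
            · rw [hy0def]; split_ifs with hc <;> omega
      · rintro ⟨hx, hy⟩
        subst hx; subst hy
        exact ⟨⟨by linarith [hy0sq], hy03, hy04⟩, by norm_num⟩
    rw [key, hfix, if_pos ⟨j, hj⟩]
    simp
  · have hfix : (Bset m).filter (fun p => ((-p.1, p.2) : ℤ × ℤ) = p) = ∅ := by
      ext ⟨x, y⟩
      simp only [mem_filter, mem_Bset, Finset.notMem_empty, iff_false, not_and, Prod.mk.injEq]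
      rintro ⟨heq, hnd, h4⟩ hfx
      intro hyy
      have hx0 : x = 0 := by omega
      subst hx0
      exfalso
      apply hsq
      refine ⟨y.natAbs, ?_⟩
      have h2 : (y.natAbs : ℤ)^2 = (m:ℤ) := by
        rcases Int.natAbs_eq y with h5 | h5 <;> rw [h5] at heq <;> linarith
      exact_mod_cast h2.symm
    rw [key, hfix, if_neg hsq]
    simp

end baseinv

section descent

def fdn (p : ℤ × ℤ) : ℤ × ℤ :=
  if ((p.2 + 2*p.1)/3) % 4 = 1 then ((p.1 - p.2)/3, (p.2 + 2*p.1)/3)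
  else (-((p.1 - p.2)/3), -((p.2 + 2*p.1)/3))

lemma fdn_eq {x y a b : ℤ} (ha : x - y = 3*a) (hb : y + 2*x = 3*b) :
    fdn (x, y) = if b % 4 = 1 then (a, b) else (-a, -b) := by
  have h3 : (3:ℤ) ≠ 0 := by norm_num
  have e1 : (x - y)/3 = a := by rw [ha]; exact Int.mul_ediv_cancel_left a h3
  have e2 : (y + 2*x)/3 = b := by rw [hb]; exact Int.mul_ediv_cancel_left b h3
  simp only [fdn]
  rw [e1, e2]

def gdn (q : ℤ × ℤ) : ℤ × ℤ :=
  if (q.2 - 2*q.1) % 4 = 1 then (q.1 + q.2, q.2 - 2*q.1) else (-(q.1+q.2), 2*q.1 - q.2)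

lemma Bset_descent {m : ℕ} : (Bset (3*m)).card = (Bset m).card := by
  apply Finset.card_nbij' fdn gdn
  · rintro ⟨x, y⟩ hp
    rw [Finset.mem_coe, mem_Bset] at hp
    obtain ⟨heq, hnd, h4⟩ := hp
    push_cast at heq
    have hdvd : (3:ℤ) ∣ (x - y) := int3_aux ⟨m, by linarith⟩ hnd
    obtain ⟨a, ha⟩ := hdvd
    obtain ⟨b, hb⟩ : (3:ℤ) ∣ (y + 2*x) := ⟨2*a + y, by linarith⟩
    have h9 : 9*(2*a^2 + b^2) = 9*(m:ℤ) := by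
      linear_combination 3*heq - 2*(x - y + 3*a)*ha - (y + 2*x + 3*b)*hb
    have hx : a + b = x := by omega
    have hbodd : b % 2 = 1 := by omega
    rw [fdn_eq ha hb]
    split_ifs with hb4 <;> rw [Finset.mem_coe, mem_Bset] <;>
      refine ⟨by linarith, ?_, by omega⟩
    · rw [hx]; omega
    · have hz : -a + -b = -x := by omega
      rw [hz]; omega
  · rintro ⟨a, b⟩ hq
    rw [Finset.mem_coe, mem_Bset] at hq
    obtain ⟨heq, hnd, h4⟩ := hq
    dsimp only [gdn]
    split_ifs with hc <;> rw [Finset.mem_coe, mem_Bset] <;> push_cast <;>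
      refine ⟨by linarith, by omega, by omega⟩
  · rintro ⟨x, y⟩ hp
    rw [Finset.mem_coe, mem_Bset] at hp
    obtain ⟨heq, hnd, h4⟩ := hp
    push_cast at heq
    have hdvd : (3:ℤ) ∣ (x - y) := int3_aux ⟨m, by linarith⟩ hnd
    obtain ⟨a, ha⟩ := hdvd
    obtain ⟨b, hb⟩ : (3:ℤ) ∣ (y + 2*x) := ⟨2*a + y, by linarith⟩
    rw [fdn_eq ha hb]
    have e1 : b - 2*a = y := by omega
    have e2 : a + b = x := by omega
    split_ifs with hb4 <;> dsimp only [gdn] <;> split_ifs with hc <;>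
        simp only [Prod.mk.injEq] <;> constructor <;> omega
  · rintro ⟨a, b⟩ hq
    rw [Finset.mem_coe, mem_Bset] at hq
    obtain ⟨heq, hnd, h4⟩ := hq
    dsimp only [gdn]
    split_ifs with hc
    · rw [fdn_eq (a := a) (b := b) (by ring) (by ring), if_pos h4]
    · rw [fdn_eq (a := -a) (b := -b) (by ring) (by ring), if_neg (by omega)]
      simp

def gab (q : ℤ × ℤ) : ℤ × ℤ :=
  if (q.1 + q.2) % 6 = 1 then (q.1 + q.2, q.2 - 2*q.1) else (-(q.1+q.2), 2*q.1 - q.2)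

lemma AB {m : ℕ} (hm8 : m % 8 = 1) : (Aset (3*m)).card = (Bset m).card := by
  apply Finset.card_nbij' fdn gab
  · rintro ⟨u, v⟩ hp
    rw [Finset.mem_coe, mem_Aset] at hp
    obtain ⟨heq, hu, hv⟩ := hp
    push_cast at heq
    obtain ⟨a, ha⟩ : (3:ℤ) ∣ (u - v) := by omega
    obtain ⟨b, hb⟩ : (3:ℤ) ∣ (v + 2*u) := by omega
    have h9 : 9*(2*a^2 + b^2) = 9*(m:ℤ) := by
      linear_combination 3*heq - 2*(u - v + 3*a)*ha - (v + 2*u + 3*b)*hb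
    rw [fdn_eq ha hb]
    split_ifs with hb4 <;> rw [Finset.mem_coe, mem_Bset] <;>
      exact ⟨by linarith, by omega, by omega⟩
  · rintro ⟨a, b⟩ hq
    rw [Finset.mem_coe, mem_Bset] at hq
    obtain ⟨heq, hnd, h4⟩ := hq
    have hbodd : b % 2 = 1 := by omega
    have hb8 := int_odd_sq_mod8 hbodd
    have hm8' : (m:ℤ) % 8 = 1 := by omega
    have haeven : a % 2 = 0 := by
      by_contra hodd
      have ha8 := int_odd_sq_mod8 (by omega : a % 2 = 1)
      omega
    dsimp only [gab]
    split_ifs with hc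
    · rw [Finset.mem_coe, mem_Aset]
      exact ⟨by push_cast; linarith, by omega, by omega⟩
    · have h5 : (a+b) % 6 = 5 := by omega
      rw [Finset.mem_coe, mem_Aset]
      exact ⟨by push_cast; linarith, by omega, by omega⟩
  · rintro ⟨u, v⟩ hp
    rw [Finset.mem_coe, mem_Aset] at hp
    obtain ⟨heq, hu, hv⟩ := hp
    obtain ⟨a, ha⟩ : (3:ℤ) ∣ (u - v) := by omega
    obtain ⟨b, hb⟩ : (3:ℤ) ∣ (v + 2*u) := by omega
    rw [fdn_eq ha hb]
    split_ifs with hb4 <;> dsimp only [gab] <;> split_ifs with hc <;>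
      simp only [Prod.mk.injEq] <;> constructor <;> omega
  · rintro ⟨a, b⟩ hq
    rw [Finset.mem_coe, mem_Bset] at hq
    obtain ⟨heq, hnd, h4⟩ := hq
    dsimp only [gab]
    split_ifs with hc
    · rw [fdn_eq (a := a) (b := b) (by ring) (by ring), if_pos h4]
    · rw [fdn_eq (a := -a) (b := -b) (by ring) (by ring), if_neg (by omega)]
      simp

end descent

section pa

def paf (p : ℕ × ℕ) : ℤ × ℤ :=
  (if (p.1 : ℤ) % 6 = 1 then (p.1:ℤ) else -(p.1:ℤ),
   if (p.2 : ℤ) % 6 = 1 then (p.2:ℤ) else -(p.2:ℤ))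

def apf (q : ℤ × ℤ) : ℕ × ℕ := (q.1.natAbs, q.2.natAbs)

lemma PA {n : ℕ} : (Pset n).card = (Aset n).card := by
  apply Finset.card_nbij' paf apf
  · rintro ⟨a, b⟩ hp
    rw [Finset.mem_coe, mem_Pset] at hp
    obtain ⟨⟨ha6, ha0⟩, ⟨hb6, hb0⟩, heq⟩ := hp
    rw [cop6] at ha6 hb6
    have heq' : 2*(a:ℤ)^2 + (b:ℤ)^2 = (n:ℤ) := by exact_mod_cast heq
    dsimp only [paf]
    split_ifs with h1 h2 h2 <;> rw [Finset.mem_coe, mem_Aset] <;>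
      exact ⟨by linarith [heq'], by omega, by omega⟩
  · rintro ⟨u, v⟩ hq
    rw [Finset.mem_coe, mem_Aset] at hq
    obtain ⟨heq, hu, hv⟩ := hq
    dsimp only [apf]
    rw [Finset.mem_coe, mem_Pset]
    have heq2 : ((2*u.natAbs^2 + v.natAbs^2 : ℕ) : ℤ) = (n:ℤ) := by
      push_cast
      rw [sq_abs, sq_abs]
      linarith [heq]
    refine ⟨⟨cop6.mpr (by omega), by omega⟩, ⟨cop6.mpr (by omega), by omega⟩, ?_⟩
    exact_mod_cast heq2
  · rintro ⟨a, b⟩ _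
    dsimp only [paf, apf]
    split_ifs <;> simp
  · rintro ⟨u, v⟩ hq
    rw [Finset.mem_coe, mem_Aset] at hq
    obtain ⟨heq, hu, hv⟩ := hq
    dsimp only [apf, paf]
    split_ifs with h1 h2 h2 <;> simp only [Prod.mk.injEq] <;> constructor <;> omega

end pa

section main2

lemma mem_Pset_mod {n a b : ℕ} (h : (a, b) ∈ Pset n) : n % 24 = 3 := by
  rw [mem_Pset] at h
  obtain ⟨⟨ha6, ha0⟩, ⟨hb6, hb0⟩, heq⟩ := h
  rw [cop6] at ha6 hb6
  have ha8 := nat_odd_sq_mod8 (show a % 2 = 1 by omega)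
  have hb8 := nat_odd_sq_mod8 (show b % 2 = 1 by omega)
  have ha3 := nat_sq_mod3 (show ¬ a % 3 = 0 by omega)
  have hb3 := nat_sq_mod3 (show ¬ b % 3 = 0 by omega)
  omega

lemma B_induct : ∀ m : ℕ, m % 2 = 1 → ((Bset m).card : ZMod 2) = if ∃ e j : ℕ, m = 3^e * j^2 then 1 else 0 := by
  intro m
  induction m using Nat.strong_induction_on with
  | _ m ih =>
    intro hm
    by_cases h3 : 3 ∣ m
    · obtain ⟨m', rfl⟩ := h3
      have hm' : m' % 2 = 1 := by omega
      rw [Bset_descent, ih m' (by omega) hm']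
      refine if_congr ?_ rfl rfl
      constructor
      · rintro ⟨e, j, rfl⟩
        exact ⟨e+1, j, by rw [pow_succ]; ring⟩
      · rintro ⟨e, j, hej⟩
        cases e with
        | zero =>
          simp only [pow_zero, one_mul] at hej
          have h3j : 3 ∣ j := by
            have : (3:ℕ).Prime := Nat.prime_three
            exact this.dvd_of_dvd_pow (n := 2) ⟨m', hej.symm⟩
          obtain ⟨i, rfl⟩ := h3j
          refine ⟨1, i, ?_⟩
          have hq : (3*i)^2 = 9*i^2 := by ring
          have : 3^1 * i^2 = 3*i^2 := by norm_num
          omega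
        | succ e =>
          refine ⟨e, j, ?_⟩
          rw [pow_succ] at hej
          have : 3*m' = 3*(3^e*j^2) := by rw [hej]; ring
          omega
    · rw [Bset_base hm h3]
      refine if_congr ?_ rfl rfl
      constructor
      · rintro ⟨j, rfl⟩
        exact ⟨0, j, by simp⟩
      · rintro ⟨e, j, rfl⟩
        cases e with
        | zero => exact ⟨j, by simp⟩
        | succ e => exact absurd ⟨3^e * j^2, by rw [pow_succ]; ring⟩ h3

lemma main_count (n : ℕ) :
    ((Pset n).card : ZMod 2) = if ∃ k : ℕ, Odd k ∧ 0 < k ∧ n = 3*k^2 then 1 else 0 := by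
  by_cases hg : n % 24 = 3
  · obtain ⟨m, rfl⟩ : ∃ m, n = 3*m := ⟨n/3, by omega⟩
    have hm8 : m % 8 = 1 := by omega
    rw [show ((Pset (3*m)).card : ZMod 2) = ((Aset (3*m)).card : ZMod 2) by rw [PA]]
    rw [show ((Aset (3*m)).card : ZMod 2) = ((Bset m).card : ZMod 2) by rw [AB hm8]]
    rw [B_induct m (by omega)]
    refine if_congr ?_ rfl rfl
    constructor
    · rintro ⟨e, j, hej⟩
      have hj0 : 0 < j := by
        rcases Nat.eq_zero_or_pos j with h | h
        · subst h; simp at hej; omega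
        · exact h
      have hjodd : j % 2 = 1 := by
        by_contra hje
        obtain ⟨t, rfl⟩ : ∃ t, j = 2*t := ⟨j/2, by omega⟩
        have : 2 ∣ m := ⟨3^e * 2 * t^2, by rw [hej]; ring⟩
        omega
      have hj8 := nat_odd_sq_mod8 hjodd
      have heodd : e % 2 = 0 := by
        rcases pow3_mod8 e with ⟨h1, h2⟩ | ⟨h1, h2⟩
        · exact h1
        · exfalso
          rw [hej, Nat.mul_mod, h2, hj8] at hm8
          norm_num at hm8
      obtain ⟨s, rfl⟩ : ∃ s, e = 2*s := ⟨e/2, by omega⟩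
      refine ⟨3^s * j, ?_, by positivity, ?_⟩
      · exact (Odd.pow (Nat.odd_iff.mpr rfl : Odd 3)).mul (Nat.odd_iff.mpr hjodd)
      · rw [hej, mul_pow, ← pow_mul, mul_comm s 2]
    · rintro ⟨k, hk, hk0, heq⟩
      have hmk : m = k^2 := by omega
      exact ⟨0, k, by simpa using hmk⟩
  · have h1 : Pset n = ∅ := by
      rw [Finset.eq_empty_iff_forall_notMem]
      rintro ⟨a, b⟩ h
      exact hg (mem_Pset_mod h)
    rw [h1]
    simp only [Finset.card_empty, Nat.cast_zero]
    rw [if_neg]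
    · rintro ⟨k, hk, hk0, rfl⟩
      have hko : k % 2 = 1 := Nat.odd_iff.mp hk
      have := nat_odd_sq_mod8 hko
      omega

end main2




lemma ite_one_zero_mul (P Q : Prop) [Decidable P] [Decidable Q] :
    (if P then (1:ZMod 2) else 0) * (if Q then 1 else 0) = if P ∧ Q then 1 else 0 := by
  split_ifs <;> simp_all

lemma zmod2_sq : ∀ x : ZMod 2, x * x = x := by decide

lemma coeff_Dsq (i : ℕ) : (PowerSeries.coeff (R := ZMod 2) i) (Dser * Dser)
    = if ∃ a : ℕ, Nat.Coprime a 6 ∧ 0 < a ∧ i = 2*a^2 then 1 else 0 := by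
  rw [PowerSeries.coeff_mul]
  rw [← Finset.sum_filter_add_sum_filter_not (Finset.HasAntidiagonal.antidiagonal i) (fun p => p.1 = p.2)]
  have hoff : ∑ p ∈ (Finset.HasAntidiagonal.antidiagonal i).filter (fun p => ¬ p.1 = p.2),
      (PowerSeries.coeff (R := ZMod 2) p.1) Dser * (PowerSeries.coeff (R := ZMod 2) p.2) Dser = 0 := by
    refine Finset.sum_involution (fun p _ => (p.2, p.1)) ?_ ?_ ?_ ?_
    · intro p _
      rw [mul_comm]
      exact CharTwo.add_self_eq_zero _
    · intro p hp _
      intro he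
      have h1 := (Finset.mem_filter.mp hp).2
      have : p.2 = p.1 := congrArg Prod.fst he
      exact h1 this.symm
    · intro p hp
      have h1 := Finset.mem_filter.mp hp
      have h2 := Finset.HasAntidiagonal.mem_antidiagonal.mp h1.1
      refine Finset.mem_filter.mpr ⟨Finset.HasAntidiagonal.mem_antidiagonal.mpr ?_, ?_⟩
      · dsimp only
        omega
      · dsimp only
        intro he
        exact h1.2 he.symm
    · intro p _
      rfl
  rw [hoff, add_zero]
  have hdiag : (Finset.HasAntidiagonal.antidiagonal i).filter (fun p => p.1 = p.2)
      = if i % 2 = 0 then {(i/2, i/2)} else (∅ : Finset (ℕ × ℕ)) := by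
    split_ifs with h <;> ext ⟨x, y⟩ <;>
      simp only [Finset.mem_filter, Finset.HasAntidiagonal.mem_antidiagonal, Finset.mem_singleton,
        Finset.notMem_empty, Prod.mk.injEq, iff_false, not_and] <;>
      first
        | (constructor
           · rintro ⟨h1, h2⟩; omega
           · rintro ⟨h1, h2⟩; omega)
        | (rintro h1 h2; omega)
  by_cases h : i % 2 = 0
  · rw [hdiag, if_pos h, Finset.sum_singleton]
    simp only [Dser, PowerSeries.coeff_mk]
    rw [zmod2_sq]
    refine if_congr ?_ rfl rfl
    constructor
    · rintro ⟨k, h1, h2, h3⟩; exact ⟨k, h1, h2, by omega⟩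
    · rintro ⟨k, h1, h2, h3⟩; exact ⟨k, h1, h2, by omega⟩
  · rw [hdiag, if_neg h, Finset.sum_empty, eq_comm, if_neg]
    rintro ⟨a, -, -, h3⟩
    omega

lemma indicator_as_sum (P : ℕ → Prop) (F : ℕ → ℕ) (hF : ∀ a, P a → a ≤ F a)
    (hinj : ∀ a b, P a → P b → F a = F b → a = b) (n i : ℕ) (hi : i ≤ n) :
    (if ∃ a, P a ∧ i = F a then (1:ZMod 2) else 0)
      = ∑ a ∈ Finset.range (n+1), if P a ∧ i = F a then 1 else 0 := by
  classical
  by_cases hex : ∃ a, P a ∧ i = F a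
  · obtain ⟨a, h1, h2⟩ := hex
    have ha : a ∈ Finset.range (n+1) := by
      rw [Finset.mem_range]
      have := hF a h1
      omega
    rw [if_pos ⟨a, h1, h2⟩, eq_comm]
    rw [Finset.sum_eq_single a]
    · rw [if_pos ⟨h1, h2⟩]
    · intro b _ hb
      rw [if_neg]
      rintro ⟨hb1, hb2⟩
      exact hb (hinj b a hb1 h1 (by omega))
    · intro hna
      exact absurd ha hna
  · rw [if_neg hex, eq_comm]
    apply Finset.sum_eq_zero
    intro b _
    rw [if_neg]
    rintro ⟨hb1, hb2⟩
    exact hex ⟨b, hb1, hb2⟩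

lemma coeff_cube (n : ℕ) : (PowerSeries.coeff (R := ZMod 2) n) (Dser * Dser * Dser)
    = ((Pset n).card : ZMod 2) := by
  classical
  rw [PowerSeries.coeff_mul]
  have hterm : ∀ p ∈ Finset.HasAntidiagonal.antidiagonal n,
      (PowerSeries.coeff (R := ZMod 2) p.1) (Dser * Dser) * (PowerSeries.coeff (R := ZMod 2) p.2) Dser
      = ∑ q ∈ Finset.range (n+1) ×ˢ Finset.range (n+1),
          (if ((Nat.Coprime q.1 6 ∧ 0 < q.1) ∧ p.1 = 2*q.1^2)
              ∧ ((Nat.Coprime q.2 6 ∧ 0 < q.2) ∧ p.2 = q.2^2) then (1:ZMod 2) else 0) := by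
    intro p hp
    have hple := Finset.HasAntidiagonal.mem_antidiagonal.mp hp
    have e1 := indicator_as_sum (fun a => Nat.Coprime a 6 ∧ 0 < a) (fun a => 2*a^2)
      (fun a ha => by nlinarith [ha.2]) (fun a b ha hb hab => by
        have h2 : a^2 = b^2 := by omega
        exact Nat.pow_left_injective (by norm_num) h2) n p.1 (by omega)
    have e2 := indicator_as_sum (fun a => Nat.Coprime a 6 ∧ 0 < a) (fun a => a^2)
      (fun a ha => by nlinarith [ha.2]) (fun a b ha hb hab => by
        exact Nat.pow_left_injective (by norm_num) hab) n p.2 (by omega)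
    rw [coeff_Dsq]
    rw [show (if ∃ a : ℕ, Nat.Coprime a 6 ∧ 0 < a ∧ p.1 = 2*a^2 then (1:ZMod 2) else 0)
        = (if ∃ a : ℕ, (Nat.Coprime a 6 ∧ 0 < a) ∧ p.1 = 2*a^2 then (1:ZMod 2) else 0) by
      refine if_congr ?_ rfl rfl; constructor <;> (rintro ⟨a, h⟩; exact ⟨a, by tauto⟩)]
    rw [show (PowerSeries.coeff (R := ZMod 2) p.2) Dser
        = (if ∃ a : ℕ, (Nat.Coprime a 6 ∧ 0 < a) ∧ p.2 = a^2 then (1:ZMod 2) else 0) by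
      simp only [Dser, PowerSeries.coeff_mk]
      refine if_congr ?_ rfl rfl; constructor <;> (rintro ⟨a, h⟩; exact ⟨a, by tauto⟩)]
    rw [e1, e2, Finset.sum_mul_sum]
    rw [← Finset.sum_product']
    apply Finset.sum_congr rfl
    intro q _
    by_cases h1 : (Nat.Coprime q.1 6 ∧ 0 < q.1) ∧ p.1 = 2*q.1^2
    · by_cases h2 : (Nat.Coprime q.2 6 ∧ 0 < q.2) ∧ p.2 = q.2^2
      · rw [if_pos h1, if_pos h2, one_mul, if_pos ⟨h1, h2⟩]
      · rw [if_pos h1, if_neg h2, mul_zero, if_neg (fun hc => h2 hc.2)]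
    · rw [if_neg h1, zero_mul, if_neg (fun hc => h1 hc.1)]
  rw [Finset.sum_congr rfl hterm]
  rw [Finset.sum_comm]
  have hinner : ∀ q ∈ Finset.range (n+1) ×ˢ Finset.range (n+1),
      (∑ p ∈ Finset.HasAntidiagonal.antidiagonal n,
        (if ((Nat.Coprime q.1 6 ∧ 0 < q.1) ∧ p.1 = 2*q.1^2)
            ∧ ((Nat.Coprime q.2 6 ∧ 0 < q.2) ∧ p.2 = q.2^2) then (1:ZMod 2) else 0))
      = if (Nat.Coprime q.1 6 ∧ 0 < q.1) ∧ (Nat.Coprime q.2 6 ∧ 0 < q.2) ∧ 2*q.1^2 + q.2^2 = n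
          then 1 else 0 := by
    intro q _
    by_cases hg : (Nat.Coprime q.1 6 ∧ 0 < q.1) ∧ (Nat.Coprime q.2 6 ∧ 0 < q.2)
    · by_cases hn : 2*q.1^2 + q.2^2 = n
      · rw [if_pos ⟨hg.1, hg.2, hn⟩]
        rw [Finset.sum_eq_single ((2*q.1^2, q.2^2) : ℕ × ℕ)]
        · rw [if_pos ⟨⟨hg.1, rfl⟩, ⟨hg.2, rfl⟩⟩]
        · intro p _ hne
          rw [if_neg]
          rintro ⟨⟨-, h1⟩, ⟨-, h2⟩⟩
          exact hne (by rw [Prod.ext_iff]; exact ⟨h1, h2⟩)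
        · intro hnm
          exfalso
          exact hnm (Finset.HasAntidiagonal.mem_antidiagonal.mpr hn)
      · rw [if_neg (by tauto)]
        apply Finset.sum_eq_zero
        intro p hp
        rw [if_neg]
        rintro ⟨⟨-, h1⟩, ⟨-, h2⟩⟩
        have := Finset.HasAntidiagonal.mem_antidiagonal.mp hp
        exact hn (by omega)
    · rw [if_neg (by tauto)]
      apply Finset.sum_eq_zero
      intro p _
      rw [if_neg]
      tauto
  rw [Finset.sum_congr rfl hinner]
  rw [Finset.sum_boole]
  rw [Pset]
theorem stmt1 : Dser ^ 3 = Gser := by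
  apply PowerSeries.ext
  intro n
  rw [show Dser ^ 3 = Dser * Dser * Dser by ring]
  rw [coeff_cube n, main_count n]
  simp only [Gser, PowerSeries.coeff_mk]
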